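/- arXiv:1402.4448 — 2 statements merged into one kernel-verified Lean document; each statement's English description precedes it below -/
import Mathlib

section
/- Fix u, v, w ∈ ℕ and weights α, β ∈ ℚ. Let G ∈ ℚ[[t]] be the formal power series whose coefficient of t^n is the total weight of all n-step walks in the triangle model starting at (u,v,w), and let A, B, C ∈ ℚ[[t]] be the analogous series restricted to walks whose endpoint has first, second, respectively third, coordinate equal to 0. Then (1 − 3·(α+β)·t)·G = 1 − (α+β)·t·(A+B+C) in ℚ[[t]]. -/
open scoped Classical

/-- The directed sublattice step-set Ω′. -/
def OmegaA : Finset (ℤ × ℤ × ℤ) := {(1,0,-1), (-1,1,0), (0,-1,1)}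

/-- The directed sublattice step-set Ω″. -/
def OmegaB : Finset (ℤ × ℤ × ℤ) := {(1,-1,0), (-1,0,1), (0,1,-1)}

/-- The full step-set Ω₂ = Ω′ ∪ Ω″ of the triangle model. -/
def OmegaFull : Finset (ℤ × ℤ × ℤ) := OmegaA ∪ OmegaB

/-- Position after `i` steps of the walk with step sequence `s` starting at `start`. -/
def triPos (start : ℤ × ℤ × ℤ) {n : ℕ} (s : Fin n → ℤ × ℤ × ℤ) (i : ℕ) : ℤ × ℤ × ℤ :=
  start + ∑ j ∈ Finset.univ.filter (fun j : Fin n => (j : ℕ) < i), s j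

/-- All three coordinates nonnegative. -/
def nonneg3 (v : ℤ × ℤ × ℤ) : Prop := 0 ≤ v.1 ∧ 0 ≤ v.2.1 ∧ 0 ≤ v.2.2

/-- `n`-step walks of the triangle model starting at `start`, encoded by their step
sequences: every step lies in Ω₂ and every intermediate point lies in ℕ³. -/
noncomputable def triWalks (start : ℤ × ℤ × ℤ) (n : ℕ) : Finset (Fin n → ℤ × ℤ × ℤ) :=
  (Fintype.piFinset fun _ : Fin n => OmegaFull).filter
    (fun s => ∀ i ≤ n, nonneg3 (triPos start s i))

/-- Number of steps of the walk lying in Ω′. -/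
noncomputable def countA {n : ℕ} (s : Fin n → ℤ × ℤ × ℤ) : ℕ :=
  (Finset.univ.filter fun j => s j ∈ OmegaA).card

/-- Number of steps of the walk lying in Ω″. -/
noncomputable def countB {n : ℕ} (s : Fin n → ℤ × ℤ × ℤ) : ℕ :=
  (Finset.univ.filter fun j => s j ∈ OmegaB).card

-- helper lemmas
lemma triPos_as_ite (start : ℤ × ℤ × ℤ) {n : ℕ} (s : Fin n → ℤ × ℤ × ℤ) (i : ℕ) :
    triPos start s i = start + ∑ j : Fin n, if (j : ℕ) < i then s j else 0 := by
  rw [triPos, Finset.sum_filter]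

lemma triPos_init (start : ℤ × ℤ × ℤ) {n : ℕ} (s : Fin (n+1) → ℤ × ℤ × ℤ) {i : ℕ}
    (hi : i ≤ n) : triPos start (Fin.init s) i = triPos start s i := by
  rw [triPos_as_ite, triPos_as_ite, Fin.sum_univ_castSucc]
  simp [Fin.init, Nat.not_lt.mpr hi]

lemma triPos_top (start : ℤ × ℤ × ℤ) {n : ℕ} (s : Fin (n+1) → ℤ × ℤ × ℤ) :
    triPos start s (n+1) = triPos start (Fin.init s) n + s (Fin.last n) := by
  rw [triPos_as_ite, triPos_as_ite, Fin.sum_univ_castSucc]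
  have h1 : ∀ j : Fin n, ((j:ℕ) < n + 1) := fun j => Nat.lt_succ_of_lt j.is_lt
  simp [Fin.init, h1, Fin.is_lt, add_assoc]

lemma countA_snoc {n : ℕ} (p : Fin n → ℤ × ℤ × ℤ) (x : ℤ × ℤ × ℤ) :
    countA (Fin.snoc p x) = countA p + (if x ∈ OmegaA then 1 else 0) := by
  classical
  rw [countA, countA, Finset.card_filter, Finset.card_filter, Fin.sum_univ_castSucc]
  simp [Fin.snoc_castSucc, Fin.snoc_last]

lemma countB_snoc {n : ℕ} (p : Fin n → ℤ × ℤ × ℤ) (x : ℤ × ℤ × ℤ) :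
    countB (Fin.snoc p x) = countB p + (if x ∈ OmegaB then 1 else 0) := by
  classical
  rw [countB, countB, Finset.card_filter, Finset.card_filter, Fin.sum_univ_castSucc]
  simp [Fin.snoc_castSucc, Fin.snoc_last]

lemma disjAB : ∀ x ∈ OmegaA, x ∉ OmegaB := by decide

lemma stepsum (α β : ℚ) (p : ℤ × ℤ × ℤ) (hp : nonneg3 p) :
    (∑ x ∈ OmegaFull.filter (fun x => nonneg3 (p + x)), (if x ∈ OmegaA then α else β))
      = 3*(α+β) - (α+β)*(((if p.1 = 0 then 1 else 0) + (if p.2.1 = 0 then 1 else 0)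
          + (if p.2.2 = 0 then 1 else 0) : ℚ)) := by
  obtain ⟨h1, h2, h3⟩ := hp
  obtain ⟨a, b, c⟩ := p
  simp only at h1 h2 h3 ⊢
  rw [Finset.sum_filter]
  have e : OmegaFull = {((1:ℤ),(0:ℤ),(-1:ℤ)), (-1,1,0), (0,-1,1), (1,-1,0), (-1,0,1), (0,1,-1)} := by decide
  rw [e]
  have s1 : (if nonneg3 ((a,b,c) + (1,0,-1)) then (if (((1:ℤ),0,-1)) ∈ OmegaA then α else β) else 0)
      = α - (if c = 0 then α else 0) := by
    have hm : ((((1:ℤ),0,-1)) ∈ OmegaA) := by decide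
    by_cases h0 : c = 0 <;> simp [nonneg3, Prod.mk_add_mk, hm, h0, h1, h2, h3] <;> omega
  have s2 : (if nonneg3 ((a,b,c) + (-1,1,0)) then (if (((-1:ℤ),1,0)) ∈ OmegaA then α else β) else 0)
      = α - (if a = 0 then α else 0) := by
    have hm : ((((-1:ℤ),1,0)) ∈ OmegaA) := by decide
    by_cases h0 : a = 0 <;> simp [nonneg3, Prod.mk_add_mk, hm, h0, h1, h2, h3] <;> omega
  have s3 : (if nonneg3 ((a,b,c) + (0,-1,1)) then (if (((0:ℤ),-1,1)) ∈ OmegaA then α else β) else 0)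
      = α - (if b = 0 then α else 0) := by
    have hm : ((((0:ℤ),-1,1)) ∈ OmegaA) := by decide
    by_cases h0 : b = 0 <;> simp [nonneg3, Prod.mk_add_mk, hm, h0, h1, h2, h3] <;> omega
  have s4 : (if nonneg3 ((a,b,c) + (1,-1,0)) then (if (((1:ℤ),-1,0)) ∈ OmegaA then α else β) else 0)
      = β - (if b = 0 then β else 0) := by
    have hm : ((((1:ℤ),-1,0)) ∉ OmegaA) := by decide
    by_cases h0 : b = 0 <;> simp [nonneg3, Prod.mk_add_mk, hm, h0, h1, h2, h3] <;> omega
  have s5 : (if nonneg3 ((a,b,c) + (-1,0,1)) then (if (((-1:ℤ),0,1)) ∈ OmegaA then α else β) else 0)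
      = β - (if a = 0 then β else 0) := by
    have hm : ((((-1:ℤ),0,1)) ∉ OmegaA) := by decide
    by_cases h0 : a = 0 <;> simp [nonneg3, Prod.mk_add_mk, hm, h0, h1, h2, h3] <;> omega
  have s6 : (if nonneg3 ((a,b,c) + (0,1,-1)) then (if (((0:ℤ),1,-1)) ∈ OmegaA then α else β) else 0)
      = β - (if c = 0 then β else 0) := by
    have hm : ((((0:ℤ),1,-1)) ∉ OmegaA) := by decide
    by_cases h0 : c = 0 <;> simp [nonneg3, Prod.mk_add_mk, hm, h0, h1, h2, h3] <;> omega
  rw [Finset.sum_insert (by decide), Finset.sum_insert (by decide), Finset.sum_insert (by decide),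
    Finset.sum_insert (by decide), Finset.sum_insert (by decide), Finset.sum_singleton,
    s1, s2, s3, s4, s5, s6]
  by_cases ha : a = 0 <;> by_cases hb : b = 0 <;> by_cases hc : c = 0 <;>
    simp [ha, hb, hc] <;> ring

lemma mem_triWalks {start : ℤ × ℤ × ℤ} {n : ℕ} {s : Fin n → ℤ × ℤ × ℤ} :
    s ∈ triWalks start n ↔ (∀ j, s j ∈ OmegaFull) ∧ ∀ i ≤ n, nonneg3 (triPos start s i) := by
  simp [triWalks, Fintype.mem_piFinset]

lemma walk_rec (α β : ℚ) (start : ℤ × ℤ × ℤ) (n : ℕ) :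
    (∑ s ∈ triWalks start (n+1), (α ^ countA s * β ^ countB s : ℚ))
      = ∑ p ∈ triWalks start n, (α ^ countA p * β ^ countB p) *
          (∑ x ∈ OmegaFull.filter (fun x => nonneg3 (triPos start p n + x)),
            (if x ∈ OmegaA then α else β)) := by
  rw [eq_comm]
  simp_rw [Finset.mul_sum]
  rw [Finset.sum_sigma']
  refine Finset.sum_nbij' (fun q => Fin.snoc q.1 q.2) (fun s => ⟨Fin.init s, s (Fin.last n)⟩)
    ?_ ?_ ?_ ?_ ?_
  · rintro ⟨p, x⟩ hq
    rw [Finset.mem_sigma] at hq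
    obtain ⟨hp, hx⟩ := hq
    rw [Finset.mem_filter] at hx
    rw [mem_triWalks] at hp ⊢
    refine ⟨?_, ?_⟩
    · intro j
      refine Fin.lastCases ?_ ?_ j
      · simpa using hx.1
      · intro k; simpa using hp.1 k
    · intro i hi
      rcases Nat.lt_or_ge i (n+1) with h | h
      · have hi' : i ≤ n := Nat.lt_succ_iff.mp h
        rw [← triPos_init start _ hi', Fin.init_snoc]
        exact hp.2 i hi'
      · have : i = n + 1 := le_antisymm hi h
        subst this
        rw [triPos_top, Fin.init_snoc]
        simpa using hx.2
  · intro s hs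
    rw [mem_triWalks] at hs
    rw [Finset.mem_sigma, Finset.mem_filter, mem_triWalks]
    refine ⟨⟨fun j => hs.1 _, fun i hi => ?_⟩, hs.1 _, ?_⟩
    · rw [triPos_init start s hi]; exact hs.2 i (Nat.le_succ_of_le hi)
    · rw [← triPos_top]; exact hs.2 (n+1) le_rfl
  · rintro ⟨p, x⟩ _
    simp [Fin.init_snoc, Fin.snoc_last]
  · intro s _
    exact Fin.snoc_init_self s
  · rintro ⟨p, x⟩ hq
    rw [Finset.mem_sigma, Finset.mem_filter] at hq
    have hxF : x ∈ OmegaFull := hq.2.1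
    rw [countA_snoc, countB_snoc]
    by_cases hx : x ∈ OmegaA
    · have hxB : x ∉ OmegaB := disjAB x hx
      simp [hx, hxB, pow_succ]
      ring
    · have hxB : x ∈ OmegaB := by
        rcases Finset.mem_union.mp hxF with h | h
        · exact absurd h hx
        · exact h
      simp [hx, hxB, pow_succ]
      ring

lemma coeff_rec (α β : ℚ) (start : ℤ × ℤ × ℤ) (n : ℕ) :
    (∑ s ∈ triWalks start (n+1), (α ^ countA s * β ^ countB s : ℚ))
      = 3*(α+β) * (∑ s ∈ triWalks start n, α ^ countA s * β ^ countB s)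
        - (α+β) * ((∑ s ∈ (triWalks start n).filter (fun s => (triPos start s n).1 = 0),
              α ^ countA s * β ^ countB s)
          + (∑ s ∈ (triWalks start n).filter (fun s => (triPos start s n).2.1 = 0),
              α ^ countA s * β ^ countB s)
          + (∑ s ∈ (triWalks start n).filter (fun s => (triPos start s n).2.2 = 0),
              α ^ countA s * β ^ countB s)) := by
  rw [walk_rec]
  trans (∑ p ∈ triWalks start n, (3*(α+β) * (α ^ countA p * β ^ countB p)
      - (α+β) * ((if (triPos start p n).1 = 0 then α ^ countA p * β ^ countB p else 0)
        + (if (triPos start p n).2.1 = 0 then α ^ countA p * β ^ countB p else 0)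
        + (if (triPos start p n).2.2 = 0 then α ^ countA p * β ^ countB p else 0))))
  · refine Finset.sum_congr rfl (fun p hp => ?_)
    rw [stepsum α β _ ((mem_triWalks.mp hp).2 n le_rfl)]
    split_ifs <;> ring
  · rw [Finset.sum_sub_distrib, ← Finset.mul_sum, ← Finset.mul_sum]
    simp only [Finset.sum_add_distrib, ← Finset.sum_filter]

lemma walks_zero (α β : ℚ) (start : ℤ × ℤ × ℤ) (h : nonneg3 start) :
    (∑ s ∈ triWalks start 0, (α ^ countA s * β ^ countB s : ℚ)) = 1 := by
  have he : triWalks start 0 = Finset.univ := by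
    apply Finset.eq_univ_iff_forall.mpr
    intro s
    rw [mem_triWalks]
    refine ⟨fun j => j.elim0, fun i hi => ?_⟩
    have : i = 0 := Nat.le_zero.mp hi
    subst this
    simpa [triPos] using h
  rw [he, Finset.univ_unique, Finset.sum_singleton]
  simp [countA, countB]


/-- Relation between the full weighted generating function of
triangle-model walks starting at `(u,v,w)` and those ending on the boundary. -/
theorem triangle_full_vs_boundary_gf (u v w : ℕ) (α β : ℚ) :
    (1 - PowerSeries.C (3 * (α + β)) * PowerSeries.X) *
        (PowerSeries.mk fun n =>
          ∑ s ∈ triWalks ((u : ℤ), (v : ℤ), (w : ℤ)) n, α ^ countA s * β ^ countB s)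
      = 1 - PowerSeries.C (α + β) * PowerSeries.X *
          ((PowerSeries.mk fun n =>
              ∑ s ∈ (triWalks ((u : ℤ), (v : ℤ), (w : ℤ)) n).filter
                  (fun s => (triPos ((u : ℤ), (v : ℤ), (w : ℤ)) s n).1 = 0),
                α ^ countA s * β ^ countB s) +
            (PowerSeries.mk fun n =>
              ∑ s ∈ (triWalks ((u : ℤ), (v : ℤ), (w : ℤ)) n).filter
                  (fun s => (triPos ((u : ℤ), (v : ℤ), (w : ℤ)) s n).2.1 = 0),
                α ^ countA s * β ^ countB s) +
            (PowerSeries.mk fun n =>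
              ∑ s ∈ (triWalks ((u : ℤ), (v : ℤ), (w : ℤ)) n).filter
                  (fun s => (triPos ((u : ℤ), (v : ℤ), (w : ℤ)) s n).2.2 = 0),
                α ^ countA s * β ^ countB s)) := by
  have hst : nonneg3 ((u : ℤ), (v : ℤ), (w : ℤ)) := by
    exact ⟨Int.ofNat_nonneg u, Int.ofNat_nonneg v, Int.ofNat_nonneg w⟩
  ext n
  rw [sub_mul, one_mul, mul_assoc]
  cases n with
  | zero =>
    simp [walks_zero α β _ hst]
  | succ n =>
    rw [map_sub, map_sub, PowerSeries.coeff_C_mul, PowerSeries.coeff_succ_X_mul,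
      mul_assoc (PowerSeries.C (α+β)) PowerSeries.X,
      PowerSeries.coeff_C_mul, PowerSeries.coeff_succ_X_mul]
    simp only [PowerSeries.coeff_mk, map_add, PowerSeries.coeff_one, Nat.succ_ne_zero,
      if_false]
    rw [coeff_rec]
    ring
end

section
/- Fix L ∈ ℕ and weights α, β ∈ ℚ. Let G ∈ ℚ[[t]] be the formal power series whose coefficient of t^n is the total weight of all n-step walks in the triangle model starting at the corner (L,0,0). Then (1−p)·(1−p^(L+3))·G = (1−p^3)·(1−p^(L+1)) in ℚ[[t]]. -/
open scoped Classical

noncomputable def wt (α β : ℚ) (ω : ℤ × ℤ × ℤ) : ℚ :=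
  (if ω ∈ OmegaA then α else 0) + (if ω ∈ OmegaB then β else 0)

noncomputable def Fs (α β : ℚ) (s : ℤ × ℤ × ℤ) : PowerSeries ℚ :=
  PowerSeries.mk fun n => ∑ σ ∈ triWalks s n, ∏ j, wt α β (σ j)

lemma weight_eq_prod (α β : ℚ) {n : ℕ} {σ : Fin n → ℤ × ℤ × ℤ}
    (h : ∀ j, σ j ∈ OmegaFull) :
    α ^ countA σ * β ^ countB σ = ∏ j, wt α β (σ j) := by
  classical
  rw [← Finset.prod_filter_mul_prod_filter_not Finset.univ (fun j => σ j ∈ OmegaA)]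
  have h1 : ∀ j ∈ Finset.univ.filter (fun j => σ j ∈ OmegaA), wt α β (σ j) = α := by
    intro j hj
    rw [Finset.mem_filter] at hj
    have hnB : σ j ∉ OmegaB := by
      have := hj.2; revert this
      have : ∀ x ∈ OmegaA, x ∉ OmegaB := by decide
      exact fun h' => this _ h'
    simp [wt, hj.2, hnB]
  have h2 : ∀ j ∈ Finset.univ.filter (fun j => ¬ σ j ∈ OmegaA), wt α β (σ j) = β := by
    intro j hj
    rw [Finset.mem_filter] at hj
    have hB : σ j ∈ OmegaB := by
      have := h j
      rw [OmegaFull, Finset.mem_union] at this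
      tauto
    simp [wt, hj.2, hB]
  rw [Finset.prod_congr rfl h1, Finset.prod_congr rfl h2,
    Finset.prod_const, Finset.prod_const]
  unfold countA countB
  congr 2
  apply congrArg Finset.card
  apply Finset.filter_congr
  intro j _
  have hj := h j
  rw [OmegaFull, Finset.mem_union] at hj
  have hd : ∀ x ∈ OmegaA, x ∉ OmegaB := by decide
  constructor
  · intro hB; exact fun hA => hd _ hA hB
  · intro hnA; tauto

lemma Fs_eq (α β : ℚ) (s : ℤ × ℤ × ℤ) :
    (PowerSeries.mk fun n => ∑ σ ∈ triWalks s n, α ^ countA σ * β ^ countB σ) = Fs α β s := by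
  unfold Fs
  apply congrArg
  funext n
  apply Finset.sum_congr rfl
  intro σ hσ
  apply weight_eq_prod
  rw [triWalks, Finset.mem_filter, Fintype.mem_piFinset] at hσ
  exact hσ.1

lemma triPos_zero (start : ℤ × ℤ × ℤ) {n : ℕ} (σ : Fin n → ℤ × ℤ × ℤ) :
    triPos start σ 0 = start := by
  simp [triPos]

lemma triPos_succ (start : ℤ × ℤ × ℤ) {n : ℕ} (σ : Fin (n+1) → ℤ × ℤ × ℤ) (i : ℕ) :
    triPos start σ (i+1) = triPos (start + σ 0) (Fin.tail σ) i := by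
  unfold triPos
  rw [Finset.sum_filter, Finset.sum_filter, Fin.sum_univ_succ]
  simp only [Fin.val_zero, Nat.zero_lt_succ, if_true, Fin.val_succ, Nat.succ_lt_succ_iff,
    Fin.tail]
  rw [add_assoc]

lemma Fs_of_neg (α β : ℚ) {s : ℤ × ℤ × ℤ} (hs : ¬ nonneg3 s) : Fs α β s = 0 := by
  unfold Fs
  have : ∀ n, triWalks s n = ∅ := by
    intro n
    rw [triWalks, Finset.filter_eq_empty_iff]
    intro σ _ h
    exact hs (by simpa [triPos_zero] using h 0 (Nat.zero_le n))
  ext n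
  simp [this]

lemma mem_triWalks_succ {s : ℤ × ℤ × ℤ} (hs : nonneg3 s) {n : ℕ}
    (σ : Fin (n+1) → ℤ × ℤ × ℤ) :
    σ ∈ triWalks s (n+1) ↔ σ 0 ∈ OmegaFull ∧ Fin.tail σ ∈ triWalks (s + σ 0) n := by
  classical
  simp only [triWalks, Finset.mem_filter, Fintype.mem_piFinset]
  constructor
  · rintro ⟨hmem, hpos⟩
    refine ⟨hmem 0, fun j => hmem j.succ, fun i hi => ?_⟩
    rw [← triPos_succ]
    exact hpos (i+1) (by omega)
  · rintro ⟨h0, hmem, hpos⟩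
    refine ⟨fun j => ?_, fun i hi => ?_⟩
    · cases j using Fin.cases with
      | zero => exact h0
      | succ j => exact hmem j
    · cases i with
      | zero => simpa [triPos_zero] using hs
      | succ i => rw [triPos_succ]; exact hpos i (by omega)

lemma sum_walks_succ (α β : ℚ) {s : ℤ × ℤ × ℤ} (hs : nonneg3 s) (n : ℕ) :
    (∑ σ ∈ triWalks s (n+1), ∏ j, wt α β (σ j))
      = ∑ ω ∈ OmegaFull, wt α β ω * ∑ τ ∈ triWalks (s + ω) n, ∏ j, wt α β (τ j) := by
  classical
  have : ∀ ω ∈ OmegaFull, wt α β ω * ∑ τ ∈ triWalks (s + ω) n, ∏ j, wt α β (τ j)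
      = ∑ τ ∈ triWalks (s + ω) n, wt α β ω * ∏ j, wt α β (τ j) := by
    intro ω _; rw [Finset.mul_sum]
  have hsig : ∑ x ∈ OmegaFull.sigma (fun ω => triWalks (s + ω) n),
      (wt α β x.1 * ∏ j, wt α β (x.2 j))
      = ∑ ω ∈ OmegaFull, ∑ τ ∈ triWalks (s + ω) n, wt α β ω * ∏ j, wt α β (τ j) :=
    Finset.sum_sigma _ _ _
  rw [Finset.sum_congr rfl this, ← hsig]
  refine Finset.sum_nbij' (fun σ => ⟨σ 0, Fin.tail σ⟩)
    (fun x => Fin.cons x.1 x.2) ?_ ?_ ?_ ?_ ?_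
  · intro σ hσ
    rw [mem_triWalks_succ hs] at hσ
    exact Finset.mem_sigma.2 ⟨hσ.1, hσ.2⟩
  · intro x hx
    rw [Finset.mem_sigma] at hx
    rw [mem_triWalks_succ hs]
    simpa [Fin.cons_zero, Fin.tail_cons] using ⟨hx.1, hx.2⟩
  · intro σ _; exact Fin.cons_self_tail σ
  · intro x _; simp [Fin.cons_zero, Fin.tail_cons]
  · intro σ _
    rw [Fin.prod_univ_succ]
    rfl

lemma coeff_Fs_zero (α β : ℚ) {s : ℤ × ℤ × ℤ} (hs : nonneg3 s) :
    (PowerSeries.coeff 0) (Fs α β s) = 1 := by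
  classical
  rw [Fs, PowerSeries.coeff_mk]
  have : triWalks s 0 = Finset.univ := by
    rw [triWalks, Finset.filter_true_of_mem]
    · ext σ
      simp [Fintype.mem_piFinset]
    · intro σ _ i hi
      interval_cases i
      simpa [triPos_zero] using hs
  rw [this]
  simp [Finset.card_univ]

lemma Fs_rec (α β : ℚ) {s : ℤ × ℤ × ℤ} (hs : nonneg3 s) :
    Fs α β s = 1 + PowerSeries.X *
      ∑ ω ∈ OmegaFull, PowerSeries.C (wt α β ω) * Fs α β (s + ω) := by
  classical
  ext n
  cases n with
  | zero =>
    rw [coeff_Fs_zero α β hs]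
    simp
  | succ n =>
    rw [map_add, PowerSeries.coeff_succ_X_mul, map_sum]
    have h1 : (PowerSeries.coeff (n+1)) (1 : PowerSeries ℚ) = 0 := by
      simp
    rw [h1, zero_add]
    rw [Fs, PowerSeries.coeff_mk, sum_walks_succ α β hs n]
    apply Finset.sum_congr rfl
    intro ω _
    rw [PowerSeries.coeff_C_mul, Fs, PowerSeries.coeff_mk]

noncomputable def qf (p : PowerSeries ℚ) (m : ℤ) : PowerSeries ℚ := 1 - p ^ (m+1).toNat

noncomputable def Qf (p : PowerSeries ℚ) (s : ℤ × ℤ × ℤ) : PowerSeries ℚ :=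
  (1 + p + p^2) * (qf p s.1 * (qf p s.2.1 * qf p s.2.2))

noncomputable def Sf (p : PowerSeries ℚ) (s : ℤ × ℤ × ℤ) : PowerSeries ℚ :=
  qf p (s.1+1) * (qf p s.2.1 * qf p (s.2.2-1))
  + qf p (s.1-1) * (qf p (s.2.1+1) * qf p s.2.2)
  + qf p s.1 * (qf p (s.2.1-1) * qf p (s.2.2+1))

lemma qf_neg (p : PowerSeries ℚ) {m : ℤ} (hm : m < 0) : qf p m = 0 := by
  unfold qf
  rw [show (m+1).toNat = 0 by omega]
  simp

lemma Qf_neg (p : PowerSeries ℚ) {s : ℤ × ℤ × ℤ} (hs : ¬ nonneg3 s) : Qf p s = 0 := by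
  unfold nonneg3 at hs
  push_neg at hs
  unfold Qf
  by_cases h1 : 0 ≤ s.1
  · by_cases h2 : 0 ≤ s.2.1
    · rw [qf_neg p (hs h1 h2)]; ring
    · rw [qf_neg p (by omega : s.2.1 < 0)]; ring
  · rw [qf_neg p (by omega : s.1 < 0)]; ring

lemma starB (L : ℕ) (p : PowerSeries ℚ) (u v w : ℕ) (hL : u + v + w = L) :
    Qf p ((u:ℤ), (v:ℤ), (w:ℤ))
      = (1-p)^2 * (1 - p^(L+3)) + p * Sf p ((u:ℤ), (v:ℤ), (w:ℤ)) := by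
  unfold Qf Sf qf
  have e1 : ((u:ℤ)+1).toNat = u+1 := by omega
  have e2 : ((v:ℤ)+1).toNat = v+1 := by omega
  have e3 : ((w:ℤ)+1).toNat = w+1 := by omega
  have e4 : ((u:ℤ)+1+1).toNat = u+2 := by omega
  have e5 : ((v:ℤ)+1+1).toNat = v+2 := by omega
  have e6 : ((w:ℤ)+1+1).toNat = w+2 := by omega
  have e7 : ((u:ℤ)-1+1).toNat = u := by omega
  have e8 : ((v:ℤ)-1+1).toNat = v := by omega
  have e9 : ((w:ℤ)-1+1).toNat = w := by omega
  have eL : L + 3 = u + (v + (w + 3)) := by omega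
  simp only [e1, e2, e3, e4, e5, e6, e7, e8, e9, eL]
  simp only [pow_add, pow_succ, pow_zero]
  ring

lemma OmegaFull_eq : OmegaFull =
    ({(1,0,-1), (-1,1,0), (0,-1,1), (1,-1,0), (-1,0,1), (0,1,-1)} : Finset (ℤ × ℤ × ℤ)) := by
  decide

lemma sum_OmegaFull {M : Type*} [AddCommMonoid M] (f : ℤ × ℤ × ℤ → M) :
    ∑ ω ∈ OmegaFull, f ω =
      f (1,0,-1) + (f (-1,1,0) + (f (0,-1,1) + (f (1,-1,0) + (f (-1,0,1) + f (0,1,-1))))) := by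
  rw [OmegaFull_eq, Finset.sum_insert (by decide), Finset.sum_insert (by decide),
    Finset.sum_insert (by decide), Finset.sum_insert (by decide),
    Finset.sum_insert (by decide), Finset.sum_singleton]

lemma wtA1 (α β : ℚ) : wt α β (1,0,-1) = α := by
  rw [wt, if_pos (by decide), if_neg (by decide), add_zero]
lemma wtA2 (α β : ℚ) : wt α β (-1,1,0) = α := by
  rw [wt, if_pos (by decide), if_neg (by decide), add_zero]
lemma wtA3 (α β : ℚ) : wt α β (0,-1,1) = α := by
  rw [wt, if_pos (by decide), if_neg (by decide), add_zero]
lemma wtB1 (α β : ℚ) : wt α β (1,-1,0) = β := by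
  rw [wt, if_neg (by decide), if_pos (by decide), zero_add]
lemma wtB2 (α β : ℚ) : wt α β (-1,0,1) = β := by
  rw [wt, if_neg (by decide), if_pos (by decide), zero_add]
lemma wtB3 (α β : ℚ) : wt α β (0,1,-1) = β := by
  rw [wt, if_neg (by decide), if_pos (by decide), zero_add]

lemma starC (α β : ℚ) (p : PowerSeries ℚ) (u v w : ℕ) :
    ∑ ω ∈ OmegaFull, PowerSeries.C (wt α β ω) * Qf p (((u:ℤ), (v:ℤ), (w:ℤ)) + ω)
      = PowerSeries.C (α+β) * ((1+p+p^2) * Sf p ((u:ℤ), (v:ℤ), (w:ℤ))) := by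
  rw [sum_OmegaFull (fun ω => PowerSeries.C (wt α β ω) * Qf p (((u:ℤ), (v:ℤ), (w:ℤ)) + ω))]
  rw [wtA1, wtA2, wtA3, wtB1, wtB2, wtB3]
  simp only [Prod.mk_add_mk]
  unfold Qf Sf qf
  have e1 : ((u:ℤ)+1+1).toNat = u+2 := by omega
  have e2 : ((v:ℤ)+1+1).toNat = v+2 := by omega
  have e3 : ((w:ℤ)+1+1).toNat = w+2 := by omega
  have e4 : ((u:ℤ)+0+1).toNat = u+1 := by omega
  have e5 : ((v:ℤ)+0+1).toNat = v+1 := by omega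
  have e6 : ((w:ℤ)+0+1).toNat = w+1 := by omega
  have e7 : ((u:ℤ)+(-1)+1).toNat = u := by omega
  have e8 : ((v:ℤ)+(-1)+1).toNat = v := by omega
  have e9 : ((w:ℤ)+(-1)+1).toNat = w := by omega
  have f1 : ((u:ℤ)+1).toNat = u+1 := by omega
  have f2 : ((v:ℤ)+1).toNat = v+1 := by omega
  have f3 : ((w:ℤ)+1).toNat = w+1 := by omega
  have f4 : ((u:ℤ)-1+1).toNat = u := by omega
  have f5 : ((v:ℤ)-1+1).toNat = v := by omega
  have f6 : ((w:ℤ)-1+1).toNat = w := by omega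
  simp only [e1, e2, e3, e4, e5, e6, e7, e8, e9, f1, f2, f3, f4, f5, f6]
  simp only [pow_add, pow_succ, pow_zero]
  rw [map_add]
  ring

lemma step_sum_zero : ∀ ω ∈ OmegaFull, ω.1 + ω.2.1 + ω.2.2 = 0 := by decide

lemma key (L : ℕ) (α β : ℚ) (p : PowerSeries ℚ)
    (hp : p = PowerSeries.C (α + β) * PowerSeries.X * (1 + p + p ^ 2)) :
    ∀ s : ℤ × ℤ × ℤ, s.1 + s.2.1 + s.2.2 = (L:ℤ) →
      (1-p)^2 * (1 - p^(L+3)) * Fs α β s = Qf p s := by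
  have main : ∀ n : ℕ, ∀ s : ℤ × ℤ × ℤ, s.1 + s.2.1 + s.2.2 = (L:ℤ) →
      PowerSeries.coeff n ((1-p)^2 * (1 - p^(L+3)) * Fs α β s - Qf p s) = 0 := by
    intro n
    induction n using Nat.strong_induction_on with
    | _ n ih =>
      intro s hsum
      by_cases hs : nonneg3 s
      · -- rewrite s as natural triple
        obtain ⟨x, y, z⟩ := s
        obtain ⟨h1, h2, h3⟩ := hs
        simp only at h1 h2 h3 hsum
        obtain ⟨u, hu⟩ : ∃ u : ℕ, x = (u:ℤ) := ⟨x.toNat, by omega⟩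
        obtain ⟨v, hv⟩ : ∃ v : ℕ, y = (v:ℤ) := ⟨y.toNat, by omega⟩
        obtain ⟨w, hw⟩ : ∃ w : ℕ, z = (w:ℤ) := ⟨z.toNat, by omega⟩
        subst hu hv hw
        have hL : u + v + w = L := by exact_mod_cast hsum
        have hnn : nonneg3 ((u:ℤ), (v:ℤ), (w:ℤ)) := by
          exact ⟨Int.natCast_nonneg u, Int.natCast_nonneg v, Int.natCast_nonneg w⟩
        have hpS : p * Sf p ((u:ℤ), (v:ℤ), (w:ℤ))
            = PowerSeries.X * ∑ ω ∈ OmegaFull, PowerSeries.C (wt α β ω) *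
                Qf p (((u:ℤ), (v:ℤ), (w:ℤ)) + ω) := by
          rw [starC α β p u v w]
          nth_rewrite 1 [hp]
          ring
        have e1 : ∑ ω ∈ OmegaFull, PowerSeries.C (wt α β ω) *
              ((1-p)^2 * (1 - p^(L+3)) * Fs α β (((u:ℤ), (v:ℤ), (w:ℤ)) + ω)
                - Qf p (((u:ℤ), (v:ℤ), (w:ℤ)) + ω))
            = (1-p)^2 * (1 - p^(L+3)) *
                (∑ ω ∈ OmegaFull, PowerSeries.C (wt α β ω) * Fs α β (((u:ℤ), (v:ℤ), (w:ℤ)) + ω))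
              - ∑ ω ∈ OmegaFull, PowerSeries.C (wt α β ω) * Qf p (((u:ℤ), (v:ℤ), (w:ℤ)) + ω) := by
          rw [Finset.mul_sum, ← Finset.sum_sub_distrib]
          apply Finset.sum_congr rfl
          intro ω _
          ring
        have hE : (1-p)^2 * (1 - p^(L+3)) * Fs α β ((u:ℤ), (v:ℤ), (w:ℤ))
              - Qf p ((u:ℤ), (v:ℤ), (w:ℤ))
            = PowerSeries.X * ∑ ω ∈ OmegaFull, PowerSeries.C (wt α β ω) *
                ((1-p)^2 * (1 - p^(L+3)) * Fs α β (((u:ℤ), (v:ℤ), (w:ℤ)) + ω)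
                  - Qf p (((u:ℤ), (v:ℤ), (w:ℤ)) + ω)) := by
          rw [Fs_rec α β hnn, starB L p u v w hL, e1]
          linear_combination -hpS
        rw [hE]
        cases n with
        | zero =>
          rw [PowerSeries.coeff_zero_eq_constantCoeff, map_mul, PowerSeries.constantCoeff_X,
            zero_mul]
        | succ n =>
          rw [PowerSeries.coeff_succ_X_mul, map_sum]
          apply Finset.sum_eq_zero
          intro ω hω
          rw [PowerSeries.coeff_C_mul]
          have hz := step_sum_zero ω hω
          have hsum' : (((u:ℤ), (v:ℤ), (w:ℤ)) + ω).1 + (((u:ℤ), (v:ℤ), (w:ℤ)) + ω).2.1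
              + (((u:ℤ), (v:ℤ), (w:ℤ)) + ω).2.2 = (L:ℤ) := by
            simp only [Prod.fst_add, Prod.snd_add]
            omega
          rw [ih n (Nat.lt_succ_self n) _ hsum', mul_zero]
      · rw [Fs_of_neg α β hs, Qf_neg p hs]
        simp
  intro s hsum
  ext n
  have := main n s hsum
  rw [map_sub, sub_eq_zero] at this
  exact this

/-- The weighted generating function of triangle-model walks starting at
the corner `(L,0,0)` satisfies the closed form (17) of Mortimer–Prellberg. -/
theorem triangle_corner_gf (L : ℕ) (α β : ℚ) (p : PowerSeries ℚ)
    (hp0 : PowerSeries.constantCoeff p = 0)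
    (hp : p = PowerSeries.C (α + β) * PowerSeries.X * (1 + p + p ^ 2)) :
    (1 - p) * (1 - p ^ (L + 3)) *
        (PowerSeries.mk fun n =>
          ∑ s ∈ triWalks ((L : ℤ), 0, 0) n, α ^ countA s * β ^ countB s)
      = (1 - p ^ 3) * (1 - p ^ (L + 1)) := by

  have h1p : (1 - p : PowerSeries ℚ) ≠ 0 := by
    intro h
    have := congrArg (PowerSeries.constantCoeff) h
    rw [map_sub, map_one, hp0] at this
    simp at this
  apply mul_left_cancel₀ h1p
  rw [Fs_eq]
  have hk := key L α β p hp ((L:ℤ), 0, 0) (by simp)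
  have hQ : Qf p ((L:ℤ), 0, 0) = (1 + p + p^2) * ((1 - p^(L+1)) * ((1 - p) * (1 - p))) := by
    unfold Qf qf
    rw [show ((L:ℤ)+1).toNat = L+1 by omega, show ((0:ℤ)+1).toNat = 1 by omega]
    ring
  calc (1 - p) * ((1 - p) * (1 - p ^ (L + 3)) * Fs α β ((L:ℤ), 0, 0))
      = (1-p)^2 * (1 - p^(L+3)) * Fs α β ((L:ℤ), 0, 0) := by ring
    _ = Qf p ((L:ℤ), 0, 0) := hk
    _ = (1 - p) * ((1 - p ^ 3) * (1 - p ^ (L + 1))) := by rw [hQ]; ring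
end
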